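/- Let p ∈ (0,1) with p ≠ 1/2 and set β = (1−p)² + p². Then for every q ∈ (0,1), q^{1−β} (1−q)^β < (1−p)^{1−p} p^p. -/

import Mathlib

open Finset
open scoped Classical

namespace DSS

/-- Number of ones of a bit string. -/
def ones {n : ℕ} (x : Fin n → Bool) : ℕ := (Finset.univ.filter fun i => x i = true).card

/-- Hamming distance between two bit strings. -/
def hamming {n : ℕ} (x y : Fin n → Bool) : ℕ := (Finset.univ.filter fun i => x i ≠ y i).card

/-- The all-ones string. -/
def allOnes (n : ℕ) : Fin n → Bool := fun _ => true

/-- Probability that mutating `x` (flipping each bit independently with probability `q`)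
produces exactly `y`. -/
noncomputable def flipProb {n : ℕ} (q : ℝ) (x y : Fin n → Bool) : ℝ :=
  q ^ hamming x y * (1 - q) ^ (n - hamming x y)

/-- Probability that the offspring of `x` under mutation rate `q` lies in the set `E`. -/
noncomputable def mutProb {n : ℕ} (q : ℝ) (x : Fin n → Bool) (E : Set (Fin n → Bool)) : ℝ :=
  ∑ y : Fin n → Bool, if y ∈ E then flipProb q x y else 0

/-- One-step transition probability of the (1+1) EA on fitness `f` with mutation rate `q`. -/
noncomputable def eaStep {n : ℕ} (f : (Fin n → Bool) → ℝ) (q : ℝ) (x y : Fin n → Bool) : ℝ :=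
  (if f x ≤ f y then flipProb q x y else 0) +
    (if y = x then ∑ z : Fin n → Bool, if f z < f x then flipProb q x z else 0 else 0)

/-- Sub-probability mass of the (1+1) EA chain killed upon entering `A`, starting from the
initial mass function `μ0`: `eaKilled f q A μ0 t y` is the probability that the chain has
avoided `A` at all times `0,…,t` and is at `y` at time `t`. -/
noncomputable def eaKilled {n : ℕ} (f : (Fin n → Bool) → ℝ) (q : ℝ)
    (A : Set (Fin n → Bool)) (μ0 : (Fin n → Bool) → ℝ) : ℕ → (Fin n → Bool) → ℝ
  | 0, y => if y ∈ A then 0 else μ0 y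
  | t + 1, y => if y ∈ A then 0
      else ∑ x : Fin n → Bool, eaKilled f q A μ0 t x * eaStep f q x y

/-- The uniform distribution on bit strings. -/
noncomputable def uniform (n : ℕ) : (Fin n → Bool) → ℝ := fun _ => (1 : ℝ) / 2 ^ n

/-- Expected hitting time of the set `A` for the (1+1) EA on `f` with mutation rate `q` and
initial distribution `μ0`, via `E[T] = ∑_{t ≥ 0} P(T > t)`. -/
noncomputable def eaHitTime {n : ℕ} (f : (Fin n → Bool) → ℝ) (q : ℝ)
    (A : Set (Fin n → Bool)) (μ0 : (Fin n → Bool) → ℝ) : ℝ :=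
  ∑' t : ℕ, ∑ y : Fin n → Bool, eaKilled f q A μ0 t y

/-- The set of global maxima of a fitness function. -/
def maxSet {n : ℕ} (f : (Fin n → Bool) → ℝ) : Set (Fin n → Bool) := {x | ∀ y, f y ≤ f x}

/-- Expected runtime `E[T(q)]` of the (1+1) EA on `f` with mutation rate `q`:
the expectation of the least `t ≥ 0` such that `X_t` is a global maximum of `f`,
started from the uniform distribution. -/
noncomputable def expectedRuntime {n : ℕ} (f : (Fin n → Bool) → ℝ) (q : ℝ) : ℝ :=
  eaHitTime f q (maxSet f) (uniform n)

/-- The map `f_p(x) = p(1-x) + (1-p)x`. -/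
noncomputable def fp (p : ℝ) (x : ℝ) : ℝ := p * (1 - x) + (1 - p) * x

/-- `s p k = f_p^{(k)}(1)`. -/
noncomputable def s (p : ℝ) (k : ℕ) : ℝ := (fp p)^[k] 1

/-- `N(n)`: the least `k ≥ 1` with `⌊n s_k⌋ = ⌊n/2⌋`. -/
noncomputable def NN (p : ℝ) (n : ℕ) : ℕ :=
  sInf {k : ℕ | 1 ≤ k ∧ ⌊(n : ℝ) * s p k⌋ = ⌊(n : ℝ) / 2⌋}

/-- `x ∈ S_k`, i.e. the number of ones of `x` is `⌊n s_k⌋`. -/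
def inStone (p : ℝ) {n : ℕ} (k : ℕ) (x : Fin n → Bool) : Prop :=
  (ones x : ℤ) = ⌊(n : ℝ) * s p k⌋

/-- The fitness function `DistantSteppingStones_p`: value `N + 1 - k` on `S_k`
(for the least such `k ≤ N`), and `0` elsewhere. -/
noncomputable def dss (p : ℝ) (n : ℕ) (x : Fin n → Bool) : ℝ :=
  if ∃ k ≤ NN p n, inStone p k x
  then ((NN p n + 1 - sInf {k : ℕ | k ≤ NN p n ∧ inStone p k x} : ℕ) : ℝ)
  else 0

/-- The union of the stepping stones `S_1, …, S_N`. -/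
def stones (p : ℝ) (n : ℕ) : Set (Fin n → Bool) :=
  {x | ∃ k, 1 ≤ k ∧ k ≤ NN p n ∧ inStone p k x}

/-- Sub-probability mass of the pure mutation chain (every offspring accepted) killed upon
entering `A` at times `t ≥ 1`, started at `x0`. -/
noncomputable def pureKilled {n : ℕ} (q : ℝ) (A : Set (Fin n → Bool)) (x0 : Fin n → Bool) :
    ℕ → (Fin n → Bool) → ℝ
  | 0, y => if y = x0 then 1 else 0
  | t + 1, y => if y ∈ A then 0
      else ∑ x : Fin n → Bool, pureKilled q A x0 t x * flipProb q x y

/-- Expected value of the first time `t ≥ 1` at which the pure mutation chain started at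
`x0` lies in `A`, via `E[T] = ∑_{t ≥ 0} P(T > t)`. -/
noncomputable def pureHitTime {n : ℕ} (q : ℝ) (A : Set (Fin n → Bool)) (x0 : Fin n → Bool) : ℝ :=
  ∑' t : ℕ, ∑ y : Fin n → Bool, pureKilled q A x0 t y

/-- Probability that the (1+1) EA on `f` with mutation rate `q`, started uniformly at random,
visits the set `B` strictly before the set `A`. -/
noncomputable def reachBeforeProb {n : ℕ} (f : (Fin n → Bool) → ℝ) (q : ℝ)
    (A B : Set (Fin n → Bool)) : ℝ :=
  (∑ y : Fin n → Bool, if y ∈ B then uniform n y else 0) +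
    ∑' t : ℕ, ∑ x : Fin n → Bool, eaKilled f q (A ∪ B) (uniform n) t x *
      ∑ y : Fin n → Bool, if y ∈ B then eaStep f q x y else 0

/-- Probability that, within the next `M` iterations of the (1+1) EA on `f` with mutation
rate `q` started at the current individual `x`, some produced offspring (accepted or not)
lies in `G`. -/
noncomputable def offspringReach {n : ℕ} (f : (Fin n → Bool) → ℝ) (q : ℝ)
    (G : Set (Fin n → Bool)) : ℕ → (Fin n → Bool) → ℝ
  | 0, _ => 0
  | M + 1, x => ∑ y : Fin n → Bool,
      flipProb q x y *
        (if y ∈ G then 1 else offspringReach f q G M (if f x ≤ f y then y else x))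


open Real

/-- Gibbs/AM-GM : `q^(1-b) (1-q)^b ≤ (1-b)^(1-b) b^b`. -/
lemma gibbs_aux {q b : ℝ} (hq : q ∈ Set.Ioo (0:ℝ) 1) (hb : b ∈ Set.Ioo (0:ℝ) 1) :
    q ^ (1 - b) * (1 - q) ^ b ≤ (1 - b) ^ (1 - b) * b ^ b := by
  obtain ⟨hq0, hq1⟩ := hq
  obtain ⟨hb0, hb1⟩ := hb
  have hb1' : (0:ℝ) < 1 - b := by linarith
  have hq1' : (0:ℝ) < 1 - q := by linarith
  have h := Real.geom_mean_le_arith_mean2_weighted (le_of_lt hb1') hb0.le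
    (le_of_lt (div_pos hq0 hb1')) (le_of_lt (div_pos hq1' hb0)) (by ring)
  have hsum : (1 - b) * (q / (1 - b)) + b * ((1 - q) / b) = 1 := by
    field_simp
    ring
  rw [hsum, Real.div_rpow hq0.le hb1'.le, Real.div_rpow hq1'.le hb0.le] at h
  have hden : (0:ℝ) < (1 - b) ^ (1 - b) * b ^ b :=
    mul_pos (Real.rpow_pos_of_pos hb1' _) (Real.rpow_pos_of_pos hb0 _)
  calc q ^ (1 - b) * (1 - q) ^ b
      = (q ^ (1 - b) / (1 - b) ^ (1 - b) * ((1 - q) ^ b / b ^ b)) *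
        ((1 - b) ^ (1 - b) * b ^ b) := by
        field_simp
    _ ≤ 1 * ((1 - b) ^ (1 - b) * b ^ b) := by
        exact mul_le_mul_of_nonneg_right h hden.le
    _ = (1 - b) ^ (1 - b) * b ^ b := one_mul _

/-- `φ(x) = log x * x + log(1-x) * (1-x)` is strictly monotone on `[1/2, r]` for `r < 1`. -/
lemma phi_lt {a b : ℝ} (ha : 1/2 ≤ a) (hab : a < b) (hb : b < 1) :
    Real.log a * a + Real.log (1 - a) * (1 - a) <
      Real.log b * b + Real.log (1 - b) * (1 - b) := by
  set φ : ℝ → ℝ := fun x => Real.log x * x + Real.log (1 - x) * (1 - x) with hφ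
  have key : StrictMonoOn φ (Set.Icc (1/2) b) := by
    apply strictMonoOn_of_deriv_pos (convex_Icc _ _)
    · apply ContinuousOn.add
      · exact (continuousOn_id.log (fun x hx => by
          have := hx.1; dsimp at this ⊢; linarith)).mul continuousOn_id
      · exact ((continuousOn_const.sub continuousOn_id).log (fun x hx => by
          have := hx.2; dsimp at this ⊢; nlinarith)).mul
            (continuousOn_const.sub continuousOn_id)
    · intro x hx
      rw [interior_Icc] at hx
      obtain ⟨hx1, hx2⟩ := hx
      have hx0 : (0:ℝ) < x := by linarith
      have hx1' : (0:ℝ) < 1 - x := by linarith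
      have hd : HasDerivAt φ (Real.log x - Real.log (1 - x)) x := by
        have h1 : HasDerivAt (fun x : ℝ => Real.log x * x) (Real.log x + 1) x := by
          have := (Real.hasDerivAt_log hx0.ne').mul (hasDerivAt_id x)
          refine this.congr_deriv ?_
          simp only [id_eq, inv_mul_cancel₀ hx0.ne']
          ring
        have h2 : HasDerivAt (fun x : ℝ => Real.log (1 - x) * (1 - x))
            (-(Real.log (1 - x) + 1)) x := by
          have hs : HasDerivAt (fun x : ℝ => 1 - x) (-1) x := by
            exact ((hasDerivAt_const x (1:ℝ)).sub (hasDerivAt_id' x)).congr_deriv (by ring)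
          have hl : HasDerivAt (fun x : ℝ => Real.log (1 - x)) ((1-x)⁻¹ * (-1)) x :=
            (Real.hasDerivAt_log hx1'.ne').comp x hs
          have := hl.mul hs
          refine this.congr_deriv ?_
          rw [mul_right_comm, inv_mul_cancel₀ hx1'.ne']
          ring
        have := h1.add h2
        refine this.congr_deriv ?_
        ring
      rw [hd.deriv]
      have : 1 - x < x := by linarith
      have := Real.log_lt_log hx1' this
      linarith
  have := key ⟨le_refl _ |>.trans ha, hab.le⟩ ⟨ha.trans hab.le, le_refl _⟩ hab
  simpa [hφ] using this


theorem ineq_with_beta (p : ℝ) (hp : p ∈ Set.Ioo (0 : ℝ) 1) (hp2 : p ≠ 1/2)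
    (q : ℝ) (hq : q ∈ Set.Ioo (0 : ℝ) 1) :
    q ^ (1 - ((1 - p)^2 + p^2)) * (1 - q) ^ ((1 - p)^2 + p^2) <
      (1 - p) ^ (1 - p) * p ^ p := by
  obtain ⟨hp0, hp1⟩ := hp
  set β : ℝ := (1 - p)^2 + p^2 with hβ
  have hsq : (0:ℝ) < (p - 1/2)^2 := by
    have : p - 1/2 ≠ 0 := sub_ne_zero.2 hp2
    positivity
  have hb12 : (1:ℝ)/2 < β := by nlinarith
  have hb1 : β < 1 := by nlinarith [mul_pos hp0 (by linarith : (0:ℝ) < 1 - p)]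
  have hb0 : (0:ℝ) < β := by linarith
  have h1b : (0:ℝ) < 1 - β := by linarith
  -- the exp form
  have hgexp : (1 - β) ^ (1 - β) * β ^ β =
      Real.exp (Real.log β * β + Real.log (1 - β) * (1 - β)) := by
    rw [Real.rpow_def_of_pos h1b, Real.rpow_def_of_pos hb0, ← Real.exp_add]
    ring_nf
  set r : ℝ := max p (1 - p) with hr
  have hr1 : r < 1 := by
    rcases max_cases p (1 - p) with ⟨h, _⟩ | ⟨h, _⟩ <;> rw [hr, h] <;> linarith
  have hr0 : (0:ℝ) < r := lt_of_lt_of_le hp0 (le_max_left _ _)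
  have hbr : β < r := by
    rcases lt_or_gt_of_ne hp2 with h | h
    · have : r = 1 - p := by rw [hr, max_eq_right]; linarith
      rw [this]; nlinarith [mul_pos hp0 (by linarith : (0:ℝ) < 1 - 2*p)]
    · have : r = p := by rw [hr, max_eq_left]; linarith
      rw [this]; nlinarith [mul_pos (by linarith : (0:ℝ) < 2*p - 1) (by linarith : (0:ℝ) < 1 - p)]
  have hrexp : Real.exp (Real.log r * r + Real.log (1 - r) * (1 - r)) =
      (1 - p) ^ (1 - p) * p ^ p := by
    have hr1' : (0:ℝ) < 1 - r := by linarith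
    rw [Real.exp_add, ← Real.rpow_def_of_pos hr0, ← Real.rpow_def_of_pos hr1']
    rcases lt_or_gt_of_ne hp2 with h | h
    · have hre : r = 1 - p := by rw [hr, max_eq_right]; linarith
      rw [hre]; ring_nf
    · have hre : r = p := by rw [hr, max_eq_left]; linarith
      rw [hre]; ring_nf
  calc q ^ (1 - β) * (1 - q) ^ β
      ≤ (1 - β) ^ (1 - β) * β ^ β := gibbs_aux hq ⟨hb0, hb1⟩
    _ = Real.exp (Real.log β * β + Real.log (1 - β) * (1 - β)) := hgexp
    _ < Real.exp (Real.log r * r + Real.log (1 - r) * (1 - r)) := by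
        exact Real.exp_lt_exp.2 (phi_lt hb12.le hbr hr1)
    _ = (1 - p) ^ (1 - p) * p ^ p := hrexp

end DSS
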